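/- Let F be a finite field whose multiplicative group Fˣ is generated by an element t. Let W = (Fˣ × Fˣ) ⋊ C₂ act on V = F × F, where ((u₁,u₂),1) acts by (v₁,v₂) ↦ (u₁v₁, u₂v₂) and ((u₁,u₂),σ) acts by (v₁,v₂) ↦ (u₁v₂, u₂v₁), σ being the nontrivial element of C₂. Let H be a subgroup of W containing the elements ((t,1),σ) and ((t²,1),1). Then the nonzero vectors of V split into exactly two H-orbits: the set {(v,0) : v ≠ 0} ∪ {(0,v) : v ≠ 0} is a single H-orbit, and the set {(v₁,v₂) : v₁ ≠ 0 and v₂ ≠ 0} is a single H-orbit. -/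
import Mathlib


open SemidirectProduct

def homC2 {H : Type*} [Group H] (τ : H) (hτ : τ * τ = 1) : Multiplicative (ZMod 2) →* H where
  toFun s := if s.toAdd = 0 then 1 else τ
  map_one' := by simp
  map_mul' x y := by
    have h2 : ∀ z : ZMod 2, z = 0 ∨ z = 1 := by decide
    have h11 : (1 : ZMod 2) + 1 = 0 := by decide
    rcases h2 x.toAdd with hx | hx <;> rcases h2 y.toAdd with hy | hy <;>
      simp [toAdd_mul, hx, hy, h11, hτ]

def swapAut (A : Type*) [Group A] : MulAut (A × A) := (MulEquiv.prodComm : A × A ≃* A × A)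

theorem swapAut_sq (A : Type*) [Group A] : swapAut A * swapAut A = 1 := by
  ext p <;> simp [swapAut, MulAut.mul_apply]

def swapAction (A : Type*) [Group A] : Multiplicative (ZMod 2) →* MulAut (A × A) :=
  homC2 (swapAut A) (swapAut_sq A)

abbrev WreathC2 (A : Type*) [Group A] := (A × A) ⋊[swapAction A] Multiplicative (ZMod 2)

/-- The permutation of `F × F` swapping the coordinates. -/
def swapPerm (F : Type*) : Equiv.Perm (F × F) := Equiv.prodComm F F

theorem swapPerm_sq (F : Type*) : swapPerm F * swapPerm F = 1 := Equiv.ext fun _ => rfl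

/-- The componentwise multiplication action of `Fˣ × Fˣ` on `F × F`, as permutations. -/
def basePerm (F : Type*) [Field F] : (Fˣ × Fˣ) →* Equiv.Perm (F × F) where
  toFun u := Equiv.prodCongr (MulAction.toPerm u.1) (MulAction.toPerm u.2)
  map_one' := by ext v <;> simp
  map_mul' u w := by ext v <;> simp [mul_smul]

/-- The action of the wreath product `Fˣ ≀ C₂` on `F × F`: first permute coordinates
according to the `C₂`-component, then multiply coordinatewise by the units. -/
def wreathActHom (F : Type*) [Field F] : WreathC2 Fˣ →* Equiv.Perm (F × F) :=
  SemidirectProduct.lift (basePerm F) (homC2 (swapPerm F) (swapPerm_sq F)) (by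
    intro s
    by_cases hs : s = 1 <;>
      · ext u v <;>
        simp [swapAction, homC2, swapAut, swapPerm, basePerm, hs, MulAut.conj_apply,
          Units.smul_def, Equiv.Perm.inv_def, Equiv.Perm.mul_apply])


section Aux
variable {F : Type*} [Field F]

theorem wreathActHom_mk (u : Fˣ × Fˣ) (s : Multiplicative (ZMod 2)) (v : F × F) :
    wreathActHom F ⟨u, s⟩ v =
      if s.toAdd = 0 then ((u.1 : F) * v.1, (u.2 : F) * v.2)
      else ((u.1 : F) * v.2, (u.2 : F) * v.1) := by
  have hiff : s = 1 ↔ s.toAdd = 0 := by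
    constructor <;> intro h
    · simp [h]
    · rcases s with s; simpa using h
  by_cases hs : s.toAdd = 0 <;>
    simp [wreathActHom, SemidirectProduct.lift, basePerm, homC2, swapPerm, hs, hiff,
      Units.smul_def, Equiv.Perm.mul_apply, Prod.map, Prod.swap]

theorem wreathActHom_inl (u : Fˣ × Fˣ) (v : F × F) :
    wreathActHom F (SemidirectProduct.inl u) v = ((u.1 : F) * v.1, (u.2 : F) * v.2) := by
  have h := wreathActHom_mk (F := F) u 1 v
  simpa using h

def aElt (F : Type*) [Field F] (t : Fˣ) : WreathC2 Fˣ := ⟨(t, 1), Multiplicative.ofAdd 1⟩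

theorem act_aElt (t : Fˣ) (v : F × F) :
    wreathActHom F (aElt F t) v = ((t : F) * v.2, v.1) := by
  rw [aElt, wreathActHom_mk, if_neg (by decide)]
  simp

theorem aElt_sq (t : Fˣ) :
    aElt F t * aElt F t = SemidirectProduct.inl ((t, t) : Fˣ × Fˣ) := by
  have hswap : (swapAction Fˣ) (Multiplicative.ofAdd (1 : ZMod 2)) ((t, 1) : Fˣ × Fˣ)
      = ((1, t) : Fˣ × Fˣ) := by
    simp only [swapAction, homC2, MonoidHom.coe_mk, OneHom.coe_mk]
    rw [if_neg (by decide)]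
    rfl
  refine SemidirectProduct.ext ?_ ?_
  · rw [SemidirectProduct.mul_left]
    show ((t, 1) : Fˣ × Fˣ) * (swapAction Fˣ) (Multiplicative.ofAdd (1 : ZMod 2)) ((t, 1) : Fˣ × Fˣ)
      = ((t, t) : Fˣ × Fˣ)
    rw [hswap]
    ext <;> simp
  · rw [SemidirectProduct.mul_right]
    show Multiplicative.ofAdd (1 : ZMod 2) * Multiplicative.ofAdd (1 : ZMod 2) = 1
    decide

end Aux

section Aux2
variable {F : Type*} [Field F]

theorem act_mul (g h : WreathC2 Fˣ) (v : F × F) :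
    wreathActHom F (g * h) v = wreathActHom F g (wreathActHom F h v) := by
  rw [map_mul]; rfl

theorem t2p (t : Fˣ) (p : ℤ) : (t ^ 2) ^ p = t ^ (2 * p) := by
  rw [← zpow_natCast t 2, ← zpow_mul]
  norm_num

theorem key1 (t : Fˣ) (H : Subgroup (WreathC2 Fˣ)) (h1 : aElt F t ∈ H)
    (h2 : SemidirectProduct.inl (((t ^ 2 : Fˣ), (1 : Fˣ))) ∈ H) (k : ℤ) :
    ∃ h ∈ H, wreathActHom F h ((1 : F), (0 : F)) = (((t ^ k : Fˣ) : F), 0) := by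
  have hbp : ∀ p : ℤ, SemidirectProduct.inl ((((t ^ 2 : Fˣ), (1 : Fˣ)) : Fˣ × Fˣ) ^ p) ∈ H := by
    intro p
    rw [map_zpow]
    exact Subgroup.zpow_mem H h2 p
  rcases Int.even_or_odd k with ⟨p, hp⟩ | ⟨p, hp⟩
  · refine ⟨SemidirectProduct.inl ((((t ^ 2 : Fˣ), (1 : Fˣ)) : Fˣ × Fˣ) ^ p), hbp p, ?_⟩
    rw [wreathActHom_inl]
    have hu : ((t ^ 2 : Fˣ)) ^ p = t ^ k := by
      rw [t2p, hp]; congr 1; ring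
    simp [← hu]
  · refine ⟨SemidirectProduct.inl ((((t ^ 2 : Fˣ), (1 : Fˣ)) : Fˣ × Fˣ) ^ p) * (aElt F t * aElt F t),
      mul_mem (hbp p) (mul_mem h1 h1), ?_⟩
    rw [act_mul, aElt_sq, wreathActHom_inl, wreathActHom_inl]
    have hu : ((t ^ 2 : Fˣ)) ^ p * t = t ^ k := by
      rw [t2p, hp, zpow_add_one]
    have := congrArg (Units.val : Fˣ → F) hu
    push_cast at this
    simp [mul_assoc, this]

theorem key1' (t : Fˣ) (H : Subgroup (WreathC2 Fˣ)) (h1 : aElt F t ∈ H)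
    (h2 : SemidirectProduct.inl (((t ^ 2 : Fˣ), (1 : Fˣ))) ∈ H) (k : ℤ) :
    ∃ h ∈ H, wreathActHom F h ((1 : F), (0 : F)) = (0, ((t ^ k : Fˣ) : F)) := by
  obtain ⟨h, hH, hact⟩ := key1 t H h1 h2 k
  refine ⟨aElt F t * h, mul_mem h1 hH, ?_⟩
  rw [act_mul, hact, act_aElt]
  simp

theorem key2 (t : Fˣ) (H : Subgroup (WreathC2 Fˣ)) (h1 : aElt F t ∈ H)
    (h2 : SemidirectProduct.inl (((t ^ 2 : Fˣ), (1 : Fˣ))) ∈ H) (j m : ℤ) :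
    ∃ h ∈ H, wreathActHom F h ((1 : F), (1 : F)) = (((t ^ j : Fˣ) : F), ((t ^ m : Fˣ) : F)) := by
  have hbp : ∀ p : ℤ, SemidirectProduct.inl ((((t ^ 2 : Fˣ), (1 : Fˣ)) : Fˣ × Fˣ) ^ p) ∈ H := by
    intro p
    rw [map_zpow]
    exact Subgroup.zpow_mem H h2 p
  have hcm : ∀ p : ℤ, SemidirectProduct.inl ((((t : Fˣ), (t : Fˣ)) : Fˣ × Fˣ) ^ p) ∈ H := by
    intro p
    rw [map_zpow, ← aElt_sq]
    exact Subgroup.zpow_mem H (mul_mem h1 h1) p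
  rcases Int.even_or_odd (j - m) with ⟨p, hp⟩ | ⟨p, hp⟩
  · refine ⟨SemidirectProduct.inl ((((t ^ 2 : Fˣ), (1 : Fˣ)) : Fˣ × Fˣ) ^ p) *
      SemidirectProduct.inl ((((t : Fˣ), (t : Fˣ)) : Fˣ × Fˣ) ^ m),
      mul_mem (hbp p) (hcm m), ?_⟩
    rw [act_mul, wreathActHom_inl, wreathActHom_inl]
    have hu1 : (t ^ 2 : Fˣ) ^ p * t ^ m = t ^ j := by
      rw [t2p, ← zpow_add]; congr 1; omega
    simp only [Prod.pow_fst, Prod.pow_snd, one_zpow, Units.val_one, one_mul, mul_one]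
    rw [← Units.val_mul, hu1]
  · refine ⟨SemidirectProduct.inl ((((t ^ 2 : Fˣ), (1 : Fˣ)) : Fˣ × Fˣ) ^ p) *
      SemidirectProduct.inl ((((t : Fˣ), (t : Fˣ)) : Fˣ × Fˣ) ^ m) * aElt F t,
      mul_mem (mul_mem (hbp p) (hcm m)) h1, ?_⟩
    rw [act_mul, act_mul, act_aElt, wreathActHom_inl, wreathActHom_inl]
    have hu1 : (t ^ 2 : Fˣ) ^ p * (t ^ m * t) = t ^ j := by
      rw [t2p, ← zpow_add_one, ← zpow_add]; congr 1; omega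
    simp only [Prod.pow_fst, Prod.pow_snd, one_zpow, Units.val_one, one_mul, mul_one]
    rw [← Units.val_mul, ← Units.val_mul, ← mul_assoc]
    rw [← mul_assoc] at hu1
    rw [hu1]

end Aux2
/-- Let `F` be a finite field with `Fˣ = ⟨t⟩`, and `H ≤ W = Fˣ ≀ C₂` (acting on `F × F`)
a subgroup containing `((t,1),σ)` and `((t²,1),1)`.  Then the nonzero vectors of `F × F`
split into exactly two `H`-orbits: `(V₁ ∖ {0}) ∪ (V₂ ∖ {0})` and `V ∖ (V₁ ∪ V₂)`. -/
theorem wreath_two_orbits (F : Type*) [Field F] [Fintype F] (t : Fˣ)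
    (hgen : ∀ u : Fˣ, u ∈ Subgroup.zpowers t)
    (H : Subgroup (WreathC2 Fˣ))
    (h1 : (⟨(t, 1), Multiplicative.ofAdd 1⟩ : WreathC2 Fˣ) ∈ H)
    (h2 : (⟨(t ^ 2, 1), 1⟩ : WreathC2 Fˣ) ∈ H) :
    (∃ x : F × F,
      {v : F × F | (v.1 ≠ 0 ∧ v.2 = 0) ∨ (v.1 = 0 ∧ v.2 ≠ 0)} =
        {y : F × F | ∃ h ∈ H, wreathActHom F h x = y}) ∧
    (∃ x : F × F,
      {v : F × F | v.1 ≠ 0 ∧ v.2 ≠ 0} =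
        {y : F × F | ∃ h ∈ H, wreathActHom F h x = y}) := by
  have h1' : aElt F t ∈ H := h1
  have h2' : SemidirectProduct.inl (((t ^ 2 : Fˣ), (1 : Fˣ))) ∈ H := h2
  constructor
  · refine ⟨((1 : F), (0 : F)), Set.ext fun v => ⟨?_, ?_⟩⟩
    · rintro (⟨hv1, hv2⟩ | ⟨hv1, hv2⟩)
      · obtain ⟨k, hk⟩ := hgen (Units.mk0 v.1 hv1)
        obtain ⟨h, hH, hact⟩ := key1 t H h1' h2' k
        refine ⟨h, hH, ?_⟩
        rw [hact]
        exact Prod.ext (congrArg Units.val hk) hv2.symm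
      · obtain ⟨k, hk⟩ := hgen (Units.mk0 v.2 hv2)
        obtain ⟨h, hH, hact⟩ := key1' t H h1' h2' k
        refine ⟨h, hH, ?_⟩
        rw [hact]
        exact Prod.ext hv1.symm (congrArg Units.val hk)
    · rintro ⟨h, hH, rfl⟩
      rcases h with ⟨u, s⟩
      rw [Set.mem_setOf_eq, wreathActHom_mk]
      by_cases hs : s.toAdd = 0 <;> simp [hs, Units.ne_zero]
  · refine ⟨((1 : F), (1 : F)), Set.ext fun v => ⟨?_, ?_⟩⟩
    · rintro ⟨hv1, hv2⟩
      obtain ⟨j, hj⟩ := hgen (Units.mk0 v.1 hv1)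
      obtain ⟨m, hm⟩ := hgen (Units.mk0 v.2 hv2)
      obtain ⟨h, hH, hact⟩ := key2 t H h1' h2' j m
      refine ⟨h, hH, ?_⟩
      rw [hact]
      exact Prod.ext (congrArg Units.val hj) (congrArg Units.val hm)
    · rintro ⟨h, hH, rfl⟩
      rcases h with ⟨u, s⟩
      rw [Set.mem_setOf_eq, wreathActHom_mk]
      by_cases hs : s.toAdd = 0 <;> simp [hs, Units.ne_zero]
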